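/- Let η ∈ (0, 1) and define the real sequence β_t = (−1)^t · (∏_{k=0}^{t−1} (1/2 − k)/(t − k)) · (1 − η)^t for t ∈ ℕ (so β_0 = 1, the empty product being 1). Then for every ω ∈ ℝ the series B(ω) = Σ_{t=0}^∞ β_t e^{iωt} converges absolutely, its square satisfies B(ω)² = 1 − (1 − η)e^{iω}, and consequently |B(ω)|² = |1 − η − e^{iω}|. -/

import Mathlib

open Real

open Finset Polynomial

lemma descPoch_smeval_prod (r : ℂ) (t : ℕ) :
    (descPochhammer ℤ t).smeval r = ∏ k ∈ range t, (r - k) := by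
  induction t with
  | zero => simp
  | succ n ih =>
    rw [descPochhammer_succ_right, Polynomial.smeval_mul, ih, prod_range_succ]
    congr 1
    simp [Polynomial.smeval_sub, Polynomial.smeval_X, Polynomial.smeval_natCast]

lemma choose_eq_prod (r : ℂ) (t : ℕ) :
    Ring.choose r t = (∏ k ∈ range t, (r - k)) / t.factorial := by
  have h := Ring.descPochhammer_eq_factorial_smul_choose r t
  rw [descPoch_smeval_prod] at h
  rw [h, nsmul_eq_mul]
  field_simp [Nat.cast_ne_zero.mpr (Nat.factorial_ne_zero t)]

lemma nat_prod_sub (t : ℕ) : ∏ k ∈ range t, (t - k) = t.factorial := by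
  rw [← Finset.prod_range_reflect (fun j => t - j) t, ← Finset.prod_range_add_one_eq_factorial t]
  apply prod_congr rfl
  intro k hk
  have hk' := mem_range.mp hk
  omega

lemma prod_sub_eq_factorial (t : ℕ) :
    ∏ k ∈ range t, ((t : ℂ) - k) = (t.factorial : ℂ) := by
  have : ∀ k ∈ range t, ((t : ℂ) - k) = (((t - k : ℕ) : ℂ)) := by
    intro k hk
    have := (mem_range.mp hk).le
    push_cast [Nat.cast_sub this]
    ring
  rw [prod_congr rfl this, ← Nat.cast_prod, nat_prod_sub]

lemma prod_form (t : ℕ) :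
    (∏ k ∈ range t, (((1 / 2 : ℂ)) - k) / ((t : ℂ) - k)) = Ring.choose ((1/2 : ℂ)) t := by
  rw [prod_div_distrib, prod_sub_eq_factorial, choose_eq_prod]

lemma norm_choose_le (t : ℕ) : ‖Ring.choose ((1/2 : ℂ)) t‖ ≤ 1 := by
  rw [choose_eq_prod, norm_div, norm_prod]
  rw [show ‖(t.factorial : ℂ)‖ = (t.factorial : ℝ) by
    rw [show ((t.factorial : ℂ)) = ((t.factorial : ℝ) : ℂ) by push_cast; ring, Complex.norm_real,
      Real.norm_eq_abs, abs_of_nonneg (by positivity)]]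
  rw [div_le_one (by positivity), ← Finset.prod_range_add_one_eq_factorial t, Nat.cast_prod]
  apply Finset.prod_le_prod (fun i _ => norm_nonneg _)
  intro i _
  rw [show ((1/2 : ℂ) - i) = (((1/2 - i : ℝ)) : ℂ) by push_cast; ring, Complex.norm_real,
    Real.norm_eq_abs]
  rw [abs_le]
  push_cast
  constructor <;> nlinarith [Nat.cast_nonneg (α := ℝ) i]

/-- The optimal noise coefficients for mean estimation:
`β_t = (-1)^t (1/2 choose t) (1-η)^t`, where the generalized binomial coefficient
is given by the product formula `(1/2 choose t) = ∏_{k=0}^{t-1} (1/2 - k)/(t - k)`. -/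
noncomputable def betaOpt (η : ℝ) (t : ℕ) : ℝ :=
  (-1 : ℝ) ^ t * (∏ k ∈ Finset.range t, ((1 / 2 : ℝ) - k) / ((t : ℝ) - k)) * (1 - η) ^ t

theorem betaOpt_fourier (η : ℝ) (hη0 : 0 < η) (hη1 : η < 1) :
    ∀ ω : ℝ,
      (Summable fun t : ℕ =>
        ‖(betaOpt η t : ℂ) * Complex.exp (Complex.I * (ω : ℂ) * (t : ℂ))‖) ∧
      (∑' t : ℕ, (betaOpt η t : ℂ) * Complex.exp (Complex.I * (ω : ℂ) * (t : ℂ))) ^ 2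
        = 1 - ((1 - η : ℝ) : ℂ) * Complex.exp (Complex.I * (ω : ℂ)) ∧
      ‖∑' t : ℕ, (betaOpt η t : ℂ) * Complex.exp (Complex.I * (ω : ℂ) * (t : ℂ))‖ ^ 2
        = ‖(1 : ℂ) - (η : ℂ) - Complex.exp (Complex.I * (ω : ℂ))‖ := by
  intro ω
  set e : ℂ := Complex.exp (Complex.I * (ω : ℂ)) with he_def
  have he : ‖e‖ = 1 := by
    rw [he_def, Complex.norm_exp]
    simp
  set z : ℂ := -(((1 - η : ℝ) : ℂ) * e) with hz_def
  have hzn : ‖z‖ = 1 - η := by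
    rw [hz_def, norm_neg, norm_mul, he, Complex.norm_real, Real.norm_eq_abs,
      abs_of_nonneg (by linarith), mul_one]
  -- rewrite the terms
  have hterm : ∀ t : ℕ, (betaOpt η t : ℂ) * Complex.exp (Complex.I * (ω : ℂ) * (t : ℂ))
      = Ring.choose ((1/2 : ℂ)) t * z ^ t := by
    intro t
    have hexp : Complex.exp (Complex.I * (ω : ℂ) * (t : ℂ)) = e ^ t := by
      rw [he_def, ← Complex.exp_nat_mul]
      ring_nf
    rw [hexp, betaOpt]
    push_cast
    rw [prod_form, hz_def,
      show -(((1 - η : ℝ) : ℂ) * e) = (-1) * (1 - (η : ℂ)) * e by push_cast; ring,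
      mul_pow, mul_pow]
    ring
  have hsum : Summable fun t : ℕ =>
      ‖(betaOpt η t : ℂ) * Complex.exp (Complex.I * (ω : ℂ) * (t : ℂ))‖ := by
    apply Summable.of_nonneg_of_le (fun t => norm_nonneg _) (fun t => ?_)
      (summable_geometric_of_lt_one (by linarith) (by linarith) : Summable fun t : ℕ => (1 - η) ^ t)
    rw [hterm t, norm_mul, norm_pow, hzn]
    calc ‖Ring.choose ((1/2 : ℂ)) t‖ * (1 - η) ^ t ≤ 1 * (1 - η) ^ t := by
          apply mul_le_mul_of_nonneg_right (norm_choose_le t) (pow_nonneg (by linarith) t)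
      _ = (1 - η) ^ t := one_mul _
  have hsqeq : (∑' t : ℕ, (betaOpt η t : ℂ) * Complex.exp (Complex.I * (ω : ℂ) * (t : ℂ))) ^ 2
      = 1 - ((1 - η : ℝ) : ℂ) * e := by
    have hs' : Summable fun t : ℕ => ‖Ring.choose ((1/2 : ℂ)) t * z ^ t‖ := by
      convert hsum using 2 with t
      rw [hterm t]
    have key := tsum_mul_tsum_eq_tsum_sum_antidiagonal_of_summable_norm hs' hs'
    calc (∑' t : ℕ, (betaOpt η t : ℂ) * Complex.exp (Complex.I * (ω : ℂ) * (t : ℂ))) ^ 2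
        = (∑' t : ℕ, Ring.choose ((1/2 : ℂ)) t * z ^ t)
          * (∑' t : ℕ, Ring.choose ((1/2 : ℂ)) t * z ^ t) := by
          rw [tsum_congr hterm]; ring
      _ = ∑' n : ℕ, ∑ ij ∈ antidiagonal n,
            (Ring.choose ((1/2 : ℂ)) ij.1 * z ^ ij.1) * (Ring.choose ((1/2 : ℂ)) ij.2 * z ^ ij.2) :=
          key
      _ = ∑' n : ℕ, ((Nat.choose 1 n : ℂ)) * z ^ n := by
          apply tsum_congr
          intro n
          have : ∀ ij ∈ antidiagonal n,
              (Ring.choose ((1/2 : ℂ)) ij.1 * z ^ ij.1) * (Ring.choose ((1/2 : ℂ)) ij.2 * z ^ ij.2)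
              = (Ring.choose ((1/2 : ℂ)) ij.1 * Ring.choose ((1/2 : ℂ)) ij.2) * z ^ n := by
            intro ij hij
            rw [← Finset.HasAntidiagonal.mem_antidiagonal.mp hij, pow_add]
            ring
          have hvdm := Ring.add_choose_eq (r := (1/2 : ℂ)) (s := (1/2 : ℂ)) n (Commute.all _ _)
          rw [Finset.sum_congr rfl this, ← Finset.sum_mul, ← hvdm,
            show ((1/2 + 1/2 : ℂ)) = ((1 : ℕ) : ℂ) by norm_num, Ring.choose_natCast]
      _ = ∑ n ∈ range 2, ((Nat.choose 1 n : ℂ)) * z ^ n := by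
          apply tsum_eq_sum
          intro n hn
          have : 1 < n := by
            by_contra h
            exact hn (mem_range.mpr (by omega))
          rw [Nat.choose_eq_zero_of_lt this]
          simp
      _ = 1 - ((1 - η : ℝ) : ℂ) * e := by
          simp [Finset.sum_range_succ, hz_def]
          ring
  refine ⟨hsum, hsqeq, ?_⟩
  · -- norm
    rw [← norm_pow, hsqeq]
    have hexp2 : e = (Real.cos ω : ℂ) + (Real.sin ω : ℂ) * Complex.I := by
      rw [he_def, mul_comm, Complex.exp_mul_I, Complex.ofReal_cos, Complex.ofReal_sin]
    have hns : Complex.normSq (1 - ((1 - η : ℝ) : ℂ) * e)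
        = Complex.normSq ((1 : ℂ) - (η : ℂ) - e) := by
      rw [hexp2]
      simp only [Complex.normSq_apply, Complex.sub_re, Complex.sub_im, Complex.one_re,
        Complex.one_im, Complex.mul_re, Complex.mul_im, Complex.add_re, Complex.add_im,
        Complex.ofReal_re, Complex.ofReal_im, Complex.I_re, Complex.I_im]
      linear_combination ((1 - η) ^ 2 - 1) * Real.sin_sq_add_cos_sq ω
    rw [Complex.norm_def, Complex.norm_def, hns]
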